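/- Let G be a finite simple graph and let v, w be two distinct vertices of G. There exists a burning sequence of G whose set of sources contains both v and w if and only if v and w are not adjacent in G. Equivalently, the 1-skeleton of the burning configuration space of G coincides with the complement graph of G. -/

import Mathlib

open SimpleGraph

/-- The path graph `P_n` with vertices `1, …, n` (represented by `Fin n`,
vertex `i+1` corresponds to index `i`) and edges `{i, i+1}`. -/
def pathG (n : ℕ) : SimpleGraph (Fin n) where
  Adj v w := v.val + 1 = w.val ∨ w.val + 1 = v.val
  symm := by constructor; intro v w h; tauto
  loopless := by constructor; intro v h; rcases h with h | h <;> omega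

/-- `(s 0, …, s (k-1))` is a burning sequence of `G` (written `1`-based in the paper:
`d(v_i, v_j) ≥ j - i + 1` for `i < j`, and every vertex `v` satisfies
`d(v_i, v) ≤ k + 1 - i` for some `i`). Distances are `ℕ∞`-valued. -/
def IsBurningSeq {V : Type*} (G : SimpleGraph V) {k : ℕ} (s : Fin k → V) : Prop :=
  1 ≤ k ∧
  (∀ i j : Fin k, i < j → ((j.val - i.val + 1 : ℕ) : ℕ∞) ≤ G.edist (s i) (s j)) ∧
  (∀ v : V, ∃ i : Fin k, G.edist (s i) v ≤ ((k - i.val : ℕ) : ℕ∞))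

/-- The burning time function `λ(v) = min_{1 ≤ i ≤ k} (i + d(v_i, v))`. -/
noncomputable def burnTime {V : Type*} (G : SimpleGraph V) {k : ℕ} (s : Fin k → V)
    (v : V) : ℕ :=
  (⨅ i : Fin k, ((i.val + 1 : ℕ) : ℕ∞) + G.edist (s i) v).toNat

/-- The end time `T = max_{v ∈ V} λ(v)` of a burning. -/
noncomputable def endTime {V : Type*} [Fintype V] (G : SimpleGraph V) {k : ℕ}
    (s : Fin k → V) : ℕ :=
  Finset.univ.sup fun v => burnTime G s v


lemma extend_burn {V : Type*} [Fintype V] (G : SimpleGraph V) :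
    ∀ (m k : ℕ) (s : Fin k → V), 1 ≤ k → Fintype.card V ≤ k + m →
    (∀ i j : Fin k, i < j → ((j.val - i.val + 1 : ℕ) : ℕ∞) ≤ G.edist (s i) (s j)) →
    ∃ (k' : ℕ) (s' : Fin k' → V) (h : k ≤ k'), IsBurningSeq G s' ∧
      ∀ i : Fin k, s' (Fin.castLE h i) = s i := by
  intro m
  induction m with
  | zero =>
    intro k s hk hcard hA
    refine ⟨k, s, le_refl k, ⟨hk, hA, ?_⟩, fun i => rfl⟩
    -- s is injective, k ≥ card V, so s is surjective
    have hinj : Function.Injective s := by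
      intro i j hij
      by_contra hne
      rcases lt_or_gt_of_ne hne with h | h
      · have := hA i j h
        rw [hij, SimpleGraph.edist_self] at this
        have : ((j.val - i.val + 1 : ℕ) : ℕ∞) = 0 := le_antisymm this zero_le
        simp at this
      · have := hA j i h
        rw [hij, SimpleGraph.edist_self] at this
        have : ((i.val - j.val + 1 : ℕ) : ℕ∞) = 0 := le_antisymm this zero_le
        simp at this
    have hle : k ≤ Fintype.card V := by
      simpa using Fintype.card_le_of_injective s hinj
    have hkcard : k = Fintype.card V := by omega
    have hbij : Function.Bijective s := by
      rw [Fintype.bijective_iff_injective_and_card]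
      exact ⟨hinj, by simp [hkcard]⟩
    intro u
    obtain ⟨i, hi⟩ := hbij.2 u
    exact ⟨i, by simp [hi, SimpleGraph.edist_self]⟩
  | succ m ih =>
    intro k s hk hcard hA
    by_cases hB : ∀ u : V, ∃ i : Fin k, G.edist (s i) u ≤ ((k - i.val : ℕ) : ℕ∞)
    · exact ⟨k, s, le_refl k, ⟨hk, hA, hB⟩, fun i => rfl⟩
    · push_neg at hB
      obtain ⟨u, hu⟩ := hB
      set s' : Fin (k + 1) → V := fun i => if h : i.val < k then s ⟨i.val, h⟩ else u with hs'
      have hA' : ∀ i j : Fin (k+1), i < j →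
          ((j.val - i.val + 1 : ℕ) : ℕ∞) ≤ G.edist (s' i) (s' j) := by
        intro i j hij
        have hij' : i.val < j.val := hij
        by_cases hj : j.val < k
        · have hi : i.val < k := by omega
          simp only [hs', dif_pos hi, dif_pos hj]
          exact hA ⟨i.val, hi⟩ ⟨j.val, hj⟩ hij'
        · have hjk : j.val = k := by omega
          have hi : i.val < k := by omega
          simp only [hs', dif_pos hi, dif_neg hj]
          have h2 : ((k - i.val : ℕ) : ℕ∞) < G.edist (s ⟨i.val, hi⟩) u := hu ⟨i.val, hi⟩
          have h3 := Order.add_one_le_of_lt h2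
          calc ((j.val - i.val + 1 : ℕ) : ℕ∞) = ((k - i.val : ℕ) : ℕ∞) + 1 := by
                rw [hjk]; push_cast [Nat.cast_add]; ring
            _ ≤ _ := h3
      obtain ⟨k', s'', hle, hburn, hext⟩ := ih (k + 1) s' (by omega) (by omega) hA'
      refine ⟨k', s'', by omega, hburn, fun i => ?_⟩
      have hi : i.val < k := i.isLt
      have : Fin.castLE (by omega : k ≤ k') i =
          Fin.castLE hle (Fin.castLE (by omega : k ≤ k + 1) i) := rfl
      rw [this, hext]
      simp [hs', hi]


/-- For distinct vertices `v`, `w` of `G`, there is a burning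
sequence of `G` whose set of sources contains both `v` and `w` if and only if `v`
and `w` are not adjacent in `G`; i.e. `{v, w}` is an edge of the `1`-skeleton of the
burning configuration space `Δ_G` iff it is an edge of the complement graph of `G`. -/
theorem stmt_17 {V : Type*} [Fintype V] (G : SimpleGraph V) (v w : V) (hvw : v ≠ w) :
    (∃ (k : ℕ) (s : Fin k → V), IsBurningSeq G s ∧
        (∃ i : Fin k, s i = v) ∧ (∃ j : Fin k, s j = w)) ↔
      Gᶜ.Adj v w := by
  rw [compl_adj]
  constructor
  · rintro ⟨k, s, ⟨hk, hA, hB⟩, ⟨i, hi⟩, ⟨j, hj⟩⟩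
    refine ⟨hvw, fun hadj => ?_⟩
    have h1 : G.edist v w = 1 := edist_eq_one_iff_adj.mpr hadj
    have hij : i ≠ j := by rintro rfl; exact hvw (hi ▸ hj ▸ rfl)
    rcases lt_or_gt_of_ne hij with h | h
    · have := hA i j h
      rw [hi, hj, h1] at this
      have hlt : i.val < j.val := h
      have : (j.val - i.val + 1 : ℕ) ≤ 1 := by exact_mod_cast this
      omega
    · have := hA j i h
      rw [hi, hj, edist_comm, h1] at this
      have hlt : j.val < i.val := h
      have : (i.val - j.val + 1 : ℕ) ≤ 1 := by exact_mod_cast this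
      omega
  · rintro ⟨hne, hnadj⟩
    set s₀ : Fin 2 → V := ![v, w] with hs₀
    have hA : ∀ i j : Fin 2, i < j →
        ((j.val - i.val + 1 : ℕ) : ℕ∞) ≤ G.edist (s₀ i) (s₀ j) := by
      intro i j hij
      fin_cases i <;> fin_cases j <;> simp_all
      have h0 : G.edist v w ≠ 0 := by
        simp [edist_eq_zero_iff, hne]
      have h1 : G.edist v w ≠ 1 := fun h => hnadj (edist_eq_one_iff_adj.mp h)
      have : 1 < G.edist v w := lt_of_le_of_ne (ENat.one_le_iff_ne_zero.mpr h0) (Ne.symm h1)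
      have := Order.add_one_le_of_lt this
      simpa [one_add_one_eq_two] using this
    obtain ⟨k', s', hle, hburn, hext⟩ :=
      extend_burn G (Fintype.card V) 2 s₀ (by omega) (by omega) hA
    refine ⟨k', s', hburn, ⟨Fin.castLE hle 0, ?_⟩, ⟨Fin.castLE hle 1, ?_⟩⟩
    · rw [hext 0]; simp [hs₀]
    · rw [hext 1]; simp [hs₀]
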